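/- Let p : ℝⁿ → ℝ be a polynomial of degree d ≥ 1 with p(x) = 0. Then the local flatness of the zero set satisfies θ_{Σ_p}(x,r) ≤ √2 (d−1) ζ_1(p,x,r) for every r > 0. -/

import Mathlib

open MvPolynomial Metric Filter
open scoped ENNReal

/-- Evaluate a multivariate polynomial at a point of Euclidean space. -/
noncomputable def evalPt {n : ℕ} (p : MvPolynomial (Fin n) ℝ)
    (y : EuclideanSpace ℝ (Fin n)) : ℝ :=
  MvPolynomial.eval (fun i => y i) p

/-- The zero set of a polynomial. -/
def zeroSet {n : ℕ} (p : MvPolynomial (Fin n) ℝ) : Set (EuclideanSpace ℝ (Fin n)) :=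
  {y | evalPt p y = 0}

/-- The polynomial y ↦ p(y + x). -/
noncomputable def translatePoly {n : ℕ} (p : MvPolynomial (Fin n) ℝ)
    (x : EuclideanSpace ℝ (Fin n)) : MvPolynomial (Fin n) ℝ :=
  MvPolynomial.bind₁ (fun i => MvPolynomial.X i + MvPolynomial.C (x i)) p

/-- The homogeneous part of degree `k` of `p` centered at `x`. -/
noncomputable def homPart {n : ℕ} (p : MvPolynomial (Fin n) ℝ)
    (x : EuclideanSpace ℝ (Fin n)) (k : ℕ) : MvPolynomial (Fin n) ℝ :=
  MvPolynomial.homogeneousComponent k (translatePoly p x)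

/-- The sup norm of |q| on the closed ball B(0,r), as an extended nonnegative real. -/
noncomputable def supNormBall {n : ℕ} (q : MvPolynomial (Fin n) ℝ) (r : ℝ) : ℝ≥0∞ :=
  ⨆ y ∈ Metric.closedBall (0 : EuclideanSpace ℝ (Fin n)) r, ENNReal.ofReal |evalPt q y|

/-- ζ_k(p,x,r): the relative size of the homogeneous part of degree k of a polynomial of
degree d, centered at x, on the ball of radius r. -/
noncomputable def zeta {n : ℕ} (d : ℕ) (p : MvPolynomial (Fin n) ℝ)
    (x : EuclideanSpace ℝ (Fin n)) (k : ℕ) (r : ℝ) : ℝ≥0∞ :=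
  ⨆ j ∈ (Finset.range (d + 1)).erase k,
    supNormBall (homPart p x j) r / supNormBall (homPart p x k) r

/-- A polynomial is harmonic if its Laplacian vanishes. -/
def IsHarmonic {n : ℕ} (p : MvPolynomial (Fin n) ℝ) : Prop :=
  ∑ i : Fin n, MvPolynomial.pderiv i (MvPolynomial.pderiv i p) = 0

/-- The local flatness θ_Σ(x,r): the normalized minimal Hausdorff distance between
Σ ∩ B(x,r) and (x + L) ∩ B(x,r) over hyperplanes L through the origin. -/
noncomputable def flatness {n : ℕ} (A : Set (EuclideanSpace ℝ (Fin n)))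
    (x : EuclideanSpace ℝ (Fin n)) (r : ℝ) : ℝ :=
  (1 / r) * ⨅ L : {L : Submodule ℝ (EuclideanSpace ℝ (Fin n)) // Module.finrank ℝ L = n - 1},
    Metric.hausdorffDist (A ∩ Metric.closedBall x r)
      (((fun y => x + y) '' (L.1 : Set (EuclideanSpace ℝ (Fin n)))) ∩ Metric.closedBall x r)

/-- Dp(x) ≠ 0 : some partial derivative of p is nonzero at x. -/
def gradNeZero {n : ℕ} (p : MvPolynomial (Fin n) ℝ) (x : EuclideanSpace ℝ (Fin n)) : Prop :=
  ∃ i : Fin n, MvPolynomial.eval (fun j => x j) (MvPolynomial.pderiv i p) ≠ 0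

/-- Sup of |h| on the unit sphere. -/
noncomputable def sphereSup {n : ℕ} (h : MvPolynomial (Fin n) ℝ) : ℝ :=
  sSup ((fun θ => |evalPt h θ|) '' Metric.sphere (0 : EuclideanSpace ℝ (Fin n)) 1)

/-- The polynomial y ↦ p(t·y). -/
noncomputable def dilatePoly {n : ℕ} (p : MvPolynomial (Fin n) ℝ) (t : ℝ) :
    MvPolynomial (Fin n) ℝ :=
  MvPolynomial.bind₁ (fun i => MvPolynomial.C t * MvPolynomial.X i) p


lemma eval_eq_aeval' {n : ℕ} (f : Fin n → ℝ) (q : MvPolynomial (Fin n) ℝ) :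
    MvPolynomial.eval f q = MvPolynomial.aeval f q := by
  rw [← coe_aeval_eq_eval]; rfl

lemma evalPt_translate {n : ℕ} (p : MvPolynomial (Fin n) ℝ) (x y : EuclideanSpace ℝ (Fin n)) :
    evalPt (translatePoly p x) y = evalPt p (x + y) := by
  simp only [evalPt, translatePoly, eval_eq_aeval', aeval_bind₁]
  have : (fun i => (MvPolynomial.aeval fun i => y i) (X i + C (x i))) = fun i => (x + y) i := by
    funext i
    simp [PiLp.add_apply, add_comm]
  rw [this]

lemma totalDegree_translate_le {n : ℕ} (p : MvPolynomial (Fin n) ℝ) (x : EuclideanSpace ℝ (Fin n)) :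
    (translatePoly p x).totalDegree ≤ p.totalDegree := by
  rw [translatePoly]
  conv_lhs => rw [p.as_sum, map_sum]
  refine totalDegree_finsetSum_le fun m hm => ?_
  refine le_trans ?_ (le_totalDegree hm)
  rw [bind₁_monomial]
  refine (totalDegree_mul _ _).trans ?_
  rw [totalDegree_C, zero_add]
  refine (totalDegree_finset_prod _ _).trans ?_
  have h1 : ∀ i ∈ m.support, ((X i + C (x i)) ^ m i).totalDegree ≤ m i := by
    intro i _
    refine (totalDegree_pow _ _).trans ?_
    have : (X i + C (x i)).totalDegree ≤ 1 := (totalDegree_add _ _).trans (by simp)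
    calc m i * (X i + C (x i)).totalDegree ≤ m i * 1 := Nat.mul_le_mul_left _ this
      _ = m i := Nat.mul_one _
  refine (Finset.sum_le_sum h1).trans ?_
  rw [Finsupp.sum]

lemma degree_one_eq_single {n : ℕ} {m : Fin n →₀ ℕ} (hm : m.degree = 1) :
    ∃ i, m = Finsupp.single i 1 := by
  have hne : m.support.Nonempty := by
    by_contra h
    rw [Finset.not_nonempty_iff_eq_empty] at h
    rw [Finsupp.degree_apply, h, Finset.sum_empty] at hm
    exact one_ne_zero hm.symm
  obtain ⟨i, hi⟩ := hne
  have hmi : 1 ≤ m i := Nat.one_le_iff_ne_zero.2 (Finsupp.mem_support_iff.1 hi)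
  have hle : m i ≤ 1 := by
    rw [← hm, Finsupp.degree_apply]
    exact Finset.single_le_sum (fun _ _ => Nat.zero_le _) hi
  refine ⟨i, Finsupp.ext fun j => ?_⟩
  rcases eq_or_ne j i with rfl | hj
  · simp [le_antisymm hle hmi]
  · simp only [Finsupp.single_apply, if_neg (Ne.symm hj)]
    by_contra h
    have hj' : j ∈ m.support := Finsupp.mem_support_iff.2 h
    have : 2 ≤ m.degree := by
      rw [Finsupp.degree_apply]
      calc 2 = 1 + 1 := rfl
        _ ≤ m i + m j := add_le_add hmi (Nat.one_le_iff_ne_zero.2 h)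
        _ ≤ ∑ k ∈ m.support, m k := by
            rw [← Finset.sum_pair (Ne.symm hj)]
            exact Finset.sum_le_sum_of_subset (by
              intro k hk
              simp only [Finset.mem_insert, Finset.mem_singleton] at hk
              rcases hk with rfl | rfl <;> assumption)
    omega
  
lemma homComp_one_eq {n : ℕ} (q : MvPolynomial (Fin n) ℝ) :
    homogeneousComponent 1 q = ∑ i : Fin n, C (coeff (Finsupp.single i 1) q) * X i := by
  ext m
  rw [coeff_homogeneousComponent]
  rw [coeff_sum]
  simp only [coeff_C_mul, coeff_X']
  split_ifs with h
  · obtain ⟨i₀, rfl⟩ := degree_one_eq_single h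
    rw [Finset.sum_eq_single i₀]
    · simp
    · intro j _ hj
      rw [if_neg, mul_zero]
      exact fun hc => hj (by
        have := (Finsupp.single_left_inj (one_ne_zero)).1 hc
        exact this)
    · intro h'; exact absurd (Finset.mem_univ i₀) h'
  · refine (Finset.sum_eq_zero fun i _ => ?_).symm
    rw [if_neg, mul_zero]
    intro hc
    apply h
    rw [← hc, Finsupp.degree_apply, Finsupp.support_single_ne_zero _ one_ne_zero]
    simp

lemma eval_homogeneous_smul {n k : ℕ} (h : MvPolynomial (Fin n) ℝ) (hh : h.IsHomogeneous k)
    (t : ℝ) (y : Fin n → ℝ) :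
    MvPolynomial.eval (fun i => t * y i) h = t ^ k * MvPolynomial.eval y h := by
  rw [eval_eq, eval_eq, Finset.mul_sum]
  refine Finset.sum_congr rfl fun m hm => ?_
  have hdeg : m.degree = k := by
    have := hh (MvPolynomial.mem_support_iff.1 hm)
    rw [Finsupp.degree_eq_weight_one]; exact this
  simp_rw [mul_pow]
  rw [Finset.prod_mul_distrib]
  have : ∏ i ∈ m.support, t ^ m i = t ^ k := by
    rw [Finset.prod_pow_eq_pow_sum, show ∑ i ∈ m.support, m i = k from hdeg]
  rw [this]; ring

open scoped RealInnerProductSpace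

lemma continuous_evalPt {n : ℕ} (p : MvPolynomial (Fin n) ℝ) :
    Continuous fun y : EuclideanSpace ℝ (Fin n) => evalPt p y := by
  have h1 : Continuous fun v : Fin n → ℝ => MvPolynomial.eval v p :=
    MvPolynomial.continuous_eval p
  exact h1.comp (continuous_pi fun i =>
    (continuous_apply i).comp (PiLp.continuous_ofLp 2 fun _ : Fin n => ℝ))

lemma supNormBall_zero {n : ℕ} (r : ℝ) : supNormBall (0 : MvPolynomial (Fin n) ℝ) r = 0 := by
  refine le_antisymm (iSup₂_le fun y hy => ?_) zero_le
  simp [evalPt]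

lemma sqrt_aux (A B : ℝ) (hA : 0 ≤ A) (hB : 0 ≤ B) (h : A^2 ≤ B^2) : A ≤ B := by
  nlinarith

set_option maxHeartbeats 1000000 in
/-- The relative size of the linear term controls local flatness of the zero set:
θ_{Σ_p}(x,r) ≤ √2 (d−1) ζ_1(p,x,r). -/
theorem flatness_le_zeta {n : ℕ} (p : MvPolynomial (Fin n) ℝ) (d : ℕ) (hd : 1 ≤ d)
    (hdeg : p.totalDegree = d) (x : EuclideanSpace ℝ (Fin n)) (hx : evalPt p x = 0) :
    ∀ r > (0 : ℝ), ENNReal.ofReal (flatness (zeroSet p) x r)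
      ≤ ENNReal.ofReal (Real.sqrt 2 * ((d : ℝ) - 1)) * zeta d p x 1 r := by
  intro r hr
  classical
  set q : MvPolynomial (Fin n) ℝ := translatePoly p x with hqdef
  have hhp : ∀ j, homPart p x j = homogeneousComponent j q := fun j => rfl
  have hqy : ∀ y, evalPt q y = evalPt p (x + y) := fun y => evalPt_translate p x y
  have htdq : q.totalDegree ≤ d := by rw [← hdeg]; exact totalDegree_translate_le p x
  -- decomposition of q into homogeneous components up to degree d
  have hqsum : ∑ j ∈ Finset.range (d + 1), homogeneousComponent j q = q := by
    have h0 := sum_homogeneousComponent q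
    rw [Finset.sum_subset (Finset.range_subset_range.2 (by omega : q.totalDegree + 1 ≤ d + 1))
      (fun i _ hi => homogeneousComponent_eq_zero i q (by
        simp only [Finset.mem_range, not_lt] at hi; omega))] at h0
    exact h0
  have hdecomp : ∀ y : EuclideanSpace ℝ (Fin n),
      evalPt p (x + y) = ∑ j ∈ Finset.range (d + 1), evalPt (homPart p x j) y := by
    intro y
    rw [← hqy]
    conv_lhs => rw [evalPt, ← hqsum, map_sum]
    rfl
  -- zeroth homogeneous part vanishes
  have hq0 : homPart p x 0 = 0 := by
    rw [hhp, homogeneousComponent_zero]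
    have h0 : evalPt q 0 = 0 := by rw [hqy]; simpa using hx
    have : coeff 0 q = 0 := by
      have hfz : (fun i => (0 : EuclideanSpace ℝ (Fin n)) i) = (0 : Fin n → ℝ) := rfl
      rw [← h0, evalPt, hfz, eval_zero, constantCoeff_eq]
    rw [this, map_zero]
  -- the gradient vector
  set a : EuclideanSpace ℝ (Fin n) := WithLp.toLp 2 (fun i => coeff (Finsupp.single i 1) q : Fin n → ℝ)
    with hadef
  have h1eval : ∀ y : EuclideanSpace ℝ (Fin n), evalPt (homPart p x 1) y = ⟪a, y⟫ := by
    intro y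
    rw [hhp, homComp_one_eq, evalPt, map_sum, PiLp.inner_apply]
    simp [RCLike.inner_apply, conj_trivial, hadef, mul_comm]
  by_cases hzi : zeta d p x 1 r = ⊤
  · rcases Nat.lt_or_ge d 2 with hd1 | hd2
    · -- d = 1: zeta is zero, contradiction with hzi
      exfalso
      have hd' : d = 1 := by omega
      subst hd'
      have : zeta 1 p x 1 r ≤ 0 := by
        refine iSup₂_le fun j hj => ?_
        have hj0 : j = 0 := by
          simp only [Finset.mem_erase, Finset.mem_range] at hj; omega
        subst hj0
        rw [hq0, supNormBall_zero, ENNReal.zero_div]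
      exact ENNReal.top_ne_zero (by rw [← hzi]; exact le_antisymm this zero_le)
    · rw [hzi, ENNReal.mul_top (by
        refine (ENNReal.ofReal_pos.2 ?_).ne'
        have h2 : (0:ℝ) < Real.sqrt 2 := Real.sqrt_pos.2 two_pos
        have : (1:ℝ) ≤ (d:ℝ) - 1 := by
          have : (2:ℝ) ≤ (d:ℝ) := by exact_mod_cast hd2
          linarith
        nlinarith)]
      exact le_top
  -- main case : zeta finite
  set ζ : ℝ := (zeta d p x 1 r).toReal with hζdef
  have hζ0 : 0 ≤ ζ := ENNReal.toReal_nonneg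
  -- q ≠ 0
  have hqne : q ≠ 0 := by
    intro h0
    have hp0 : p = 0 := by
      apply MvPolynomial.funext
      intro g
      have hg' : ∃ g' : EuclideanSpace ℝ (Fin n), (fun i => g' i) = g := ⟨WithLp.toLp 2 g, rfl⟩
      obtain ⟨g', rfl⟩ := hg'
      have := hqy (g' - x)
      rw [h0] at this
      simp only [evalPt, map_zero] at this ⊢
      rw [show x + (g' - x) = g' by abel] at this
      exact this.symm
    rw [hp0, totalDegree_zero] at hdeg
    omega
  -- a ≠ 0
  have hane : a ≠ 0 := by
    intro ha0
    -- then the degree-1 part vanishes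
    have hp1 : homPart p x 1 = 0 := by
      rw [hhp, homComp_one_eq]
      refine Finset.sum_eq_zero fun i _ => ?_
      have : coeff (Finsupp.single i 1) q = a i := rfl
      rw [this, ha0]
      simp
    -- some other component is nonzero
    have hex : ∃ k ∈ Finset.range (d + 1), homogeneousComponent k q ≠ 0 := by
      by_contra hall
      push_neg at hall
      exact hqne (by rw [← hqsum, Finset.sum_eq_zero hall])
    obtain ⟨k, hk, hkne⟩ := hex
    -- get a nonzero value in the ball
    obtain ⟨y₀, hy₀⟩ : ∃ y₀ : Fin n → ℝ, MvPolynomial.eval y₀ (homogeneousComponent k q) ≠ 0 := by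
      by_contra hall
      push_neg at hall
      exact hkne (MvPolynomial.funext fun g => by rw [map_zero]; exact hall g)
    set Y : EuclideanSpace ℝ (Fin n) := WithLp.toLp 2 (y₀ : Fin n → ℝ) with hY
    obtain ⟨w, hw, hwne⟩ : ∃ w : EuclideanSpace ℝ (Fin n), w ∈ Metric.closedBall
        (0 : EuclideanSpace ℝ (Fin n)) r ∧ evalPt (homogeneousComponent k q) w ≠ 0 := by
      by_cases hYr : ‖Y‖ ≤ r
      · exact ⟨Y, by simpa [Metric.mem_closedBall, dist_zero_right] using hYr, hy₀⟩
      · push_neg at hYr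
        have hYpos : 0 < ‖Y‖ := lt_trans hr hYr
        refine ⟨(r / ‖Y‖) • Y, ?_, ?_⟩
        · simp only [Metric.mem_closedBall, dist_zero_right, norm_smul]
          rw [Real.norm_eq_abs, abs_of_nonneg (by positivity), div_mul_cancel₀ _ hYpos.ne']
        · have := eval_homogeneous_smul (homogeneousComponent k q)
            (homogeneousComponent_isHomogeneous k q) (r / ‖Y‖) y₀
          rw [evalPt, show (fun i => ((r / ‖Y‖) • Y) i) = fun i => (r / ‖Y‖) * y₀ i from rfl,
            this]
          exact mul_ne_zero (pow_ne_zero _ (by positivity)) hy₀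
    -- so the sup norm of component k is nonzero while that of component 1 is zero
    have hsupk : supNormBall (homPart p x k) r ≠ 0 := by
      intro hz
      have hle : ENNReal.ofReal |evalPt (homPart p x k) w| ≤ supNormBall (homPart p x k) r :=
        le_iSup₂_of_le w hw le_rfl
      rw [hz, le_zero_iff, ENNReal.ofReal_eq_zero] at hle
      rw [hhp] at *
      exact hwne (abs_eq_zero.1 (le_antisymm hle (abs_nonneg _)))
    have hsup1 : supNormBall (homPart p x 1) r = 0 := by rw [hp1, supNormBall_zero]
    have hk1 : k ≠ 1 := fun h => hkne (by rw [h, ← hhp, hp1])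
    have hmem : k ∈ (Finset.range (d + 1)).erase 1 := Finset.mem_erase.2 ⟨hk1, hk⟩
    have : supNormBall (homPart p x k) r / supNormBall (homPart p x 1) r
        ≤ zeta d p x 1 r := le_iSup₂_of_le k hmem le_rfl
    rw [hsup1, ENNReal.div_zero hsupk] at this
    exact hzi (top_le_iff.1 this)
  have hna : 0 < ‖a‖ := norm_pos_iff.2 hane
  -- sup norm of the linear part
  have hsup1le : supNormBall (homPart p x 1) r ≤ ENNReal.ofReal (‖a‖ * r) := by
    refine iSup₂_le fun y hy => ?_
    rw [h1eval]
    refine ENNReal.ofReal_le_ofReal ((abs_real_inner_le_norm a y).trans ?_)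
    have : ‖y‖ ≤ r := by simpa [Metric.mem_closedBall, dist_zero_right] using hy
    exact mul_le_mul_of_nonneg_left this (norm_nonneg a)
  -- key uniform bound on non-linear parts
  have hkey : ∀ j ∈ Finset.range (d + 1), j ≠ 1 →
      ∀ y ∈ Metric.closedBall (0 : EuclideanSpace ℝ (Fin n)) r,
      |evalPt (homPart p x j) y| ≤ ζ * (‖a‖ * r) := by
    intro j hj hj1 y hy
    have h1 : ENNReal.ofReal |evalPt (homPart p x j) y| ≤ supNormBall (homPart p x j) r :=
      le_iSup₂_of_le y hy le_rfl
    have h2 : supNormBall (homPart p x j) r / supNormBall (homPart p x 1) r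
        ≤ zeta d p x 1 r := le_iSup₂_of_le j (Finset.mem_erase.2 ⟨hj1, hj⟩) le_rfl
    have hfin1 : supNormBall (homPart p x 1) r ≠ ⊤ :=
      ne_top_of_le_ne_top ENNReal.ofReal_ne_top hsup1le
    have h3 : supNormBall (homPart p x j) r ≤ zeta d p x 1 r * supNormBall (homPart p x 1) r :=
      (ENNReal.div_le_iff_le_mul (Or.inr hzi) (Or.inl hfin1)).1 h2
    have h4 : ENNReal.ofReal |evalPt (homPart p x j) y|
        ≤ ENNReal.ofReal ζ * ENNReal.ofReal (‖a‖ * r) := by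
      refine (h1.trans h3).trans ?_
      rw [hζdef, ENNReal.ofReal_toReal hzi]
      exact mul_le_mul_right hsup1le _
    rw [← ENNReal.ofReal_mul hζ0] at h4
    exact (ENNReal.ofReal_le_ofReal_iff (by positivity)).1 h4

  have hsqrt2 : (1:ℝ) ≤ Real.sqrt 2 := by
    rw [show (1:ℝ) = Real.sqrt 1 from (Real.sqrt_one).symm]
    exact Real.sqrt_le_sqrt (by norm_num)
  set D : ℝ := (d : ℝ) - 1 with hDdef
  have hD0 : 0 ≤ D := by
    have : (1:ℝ) ≤ (d:ℝ) := by exact_mod_cast hd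
    simp only [hDdef]; linarith
  set ε : ℝ := D * ζ with hεdef
  have hε0 : 0 ≤ ε := mul_nonneg hD0 hζ0
  set sf : Finset ℕ := ((Finset.range (d + 1)).erase 1).erase 0 with hsfdef
  have hscard : (sf.card : ℝ) = D := by
    rw [hsfdef, Finset.card_erase_of_mem, Finset.card_erase_of_mem, Finset.card_range]
    · push_cast [hDdef]
      have : (1:ℝ) ≤ (d:ℝ) := by exact_mod_cast hd
      rw [Nat.cast_sub (by omega)]
      push_cast; ring
    · exact Finset.mem_range.2 (Nat.lt_succ_of_le hd)
    · exact Finset.mem_erase.2 ⟨Nat.zero_ne_one, Finset.mem_range.2 (Nat.succ_pos d)⟩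
  have hmain : ∀ y : EuclideanSpace ℝ (Fin n),
      evalPt p (x + y) = ⟪a, y⟫ + ∑ j ∈ sf, evalPt (homPart p x j) y := by
    intro y
    rw [hdecomp y,
      ← Finset.add_sum_erase _ _ (Finset.mem_range.2 (Nat.lt_succ_of_le hd)),
      ← Finset.add_sum_erase _ _
        (Finset.mem_erase.2 ⟨Nat.zero_ne_one, Finset.mem_range.2 (Nat.succ_pos d)⟩ :
          0 ∈ (Finset.range (d+1)).erase 1),
      h1eval, hq0]
    simp only [evalPt, map_zero, zero_add, hsfdef]
  have hR : ∀ y ∈ Metric.closedBall (0 : EuclideanSpace ℝ (Fin n)) r,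
      |∑ j ∈ sf, evalPt (homPart p x j) y| ≤ ε * (‖a‖ * r) := by
    intro y hy
    calc |∑ j ∈ sf, evalPt (homPart p x j) y| ≤ ∑ j ∈ sf, |evalPt (homPart p x j) y| :=
        Finset.abs_sum_le_sum_abs _ _
      _ ≤ ∑ _j ∈ sf, ζ * (‖a‖ * r) := Finset.sum_le_sum fun j hj => by
          refine hkey j ?_ ?_ y hy
          · exact Finset.mem_of_mem_erase (Finset.mem_of_mem_erase hj)
          · exact Finset.ne_of_mem_erase (Finset.mem_of_mem_erase hj)
      _ = ε * (‖a‖ * r) := by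
          rw [Finset.sum_const, nsmul_eq_mul, hscard, hεdef]; ring
  set L : Submodule ℝ (EuclideanSpace ℝ (Fin n)) := (ℝ ∙ a)ᗮ with hLdef
  have hmemL : ∀ v : EuclideanSpace ℝ (Fin n), v ∈ L ↔ ⟪a, v⟫ = 0 := fun v =>
    Submodule.mem_orthogonal_singleton_iff_inner_right
  have hLrank : Module.finrank ℝ L = n - 1 := by
    have h2 : Module.finrank ℝ (ℝ ∙ a) + Module.finrank ℝ L = n := by
      rw [hLdef, Submodule.finrank_add_finrank_orthogonal, finrank_euclideanSpace_fin]
    rw [finrank_span_singleton hane] at h2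
    omega
  have hxS : x ∈ zeroSet p ∩ Metric.closedBall x r := ⟨hx, Metric.mem_closedBall_self hr.le⟩
  have hdir1 : ∀ z ∈ zeroSet p ∩ Metric.closedBall x r,
      ∃ w ∈ ((fun y => x + y) '' (L : Set (EuclideanSpace ℝ (Fin n))))
        ∩ Metric.closedBall x r, dist z w ≤ Real.sqrt 2 * ε * r := by
    rintro z ⟨hz0, hzB⟩
    set y : EuclideanSpace ℝ (Fin n) := z - x with hydef
    have hyr : ‖y‖ ≤ r := by
      rw [hydef, ← dist_eq_norm]; exact Metric.mem_closedBall.1 hzB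
    have hyball : y ∈ Metric.closedBall (0 : EuclideanSpace ℝ (Fin n)) r := by
      simpa [Metric.mem_closedBall, dist_zero_right] using hyr
    have hz : evalPt p (x + y) = 0 := by
      rw [show x + y = z by rw [hydef]; abel]; exact hz0
    have hkbd : |⟪a, y⟫| ≤ ε * (‖a‖ * r) := by
      have hm := hmain y
      rw [hz] at hm
      have h1 : ⟪a, y⟫ = -(∑ j ∈ sf, evalPt (homPart p x j) y) := by linarith
      rw [h1, abs_neg]
      exact hR y hyball
    set c : ℝ := ⟪a, y⟫ / (‖a‖^2) with hcdef
    set w' : EuclideanSpace ℝ (Fin n) := y - c • a with hw'def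
    have hw'L : w' ∈ L := by
      rw [hmemL, hw'def, inner_sub_right, real_inner_smul_right,
        real_inner_self_eq_norm_sq, hcdef]
      field_simp; ring
    have horth : ⟪w', c • a⟫ = 0 := by
      have h9 : ⟪w', a⟫ = 0 := by rw [real_inner_comm]; exact (hmemL w').1 hw'L
      rw [real_inner_smul_right, h9, mul_zero]
    have hnormw' : ‖w'‖ ≤ r := by
      have hpy : ‖y‖^2 = ‖w'‖^2 + ‖c • a‖^2 := by
        have h8 : y = w' + c • a := by rw [hw'def]; abel
        rw [h8, norm_add_sq_real, horth]; ring
      nlinarith [norm_nonneg w', norm_nonneg (c • a), norm_nonneg y]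
    refine ⟨x + w', ⟨⟨w', hw'L, rfl⟩, ?_⟩, ?_⟩
    · rw [Metric.mem_closedBall, dist_eq_norm, add_sub_cancel_left]
      exact hnormw'
    · have h7 : z - (x + w') = c • a := by rw [hw'def, hydef]; abel
      rw [dist_eq_norm, h7, norm_smul, Real.norm_eq_abs, hcdef, abs_div,
        abs_of_nonneg (by positivity : (0:ℝ) ≤ ‖a‖^2)]
      have h5 : |⟪a, y⟫| / ‖a‖ ^ 2 * ‖a‖ = |⟪a, y⟫| / ‖a‖ := by
        rw [pow_two]; field_simp
      rw [h5]
      have h6 : |⟪a, y⟫| / ‖a‖ ≤ ε * r := by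
        rw [div_le_iff₀ hna]
        calc |⟪a, y⟫| ≤ ε * (‖a‖ * r) := hkbd
          _ = ε * r * ‖a‖ := by ring
      refine h6.trans ?_
      calc ε * r = 1 * (ε * r) := (one_mul _).symm
        _ ≤ Real.sqrt 2 * (ε * r) :=
            mul_le_mul_of_nonneg_right hsqrt2 (mul_nonneg hε0 hr.le)
        _ = Real.sqrt 2 * ε * r := (mul_assoc _ _ _).symm
  have hdir2 : ∀ u ∈ ((fun y => x + y) '' (L : Set (EuclideanSpace ℝ (Fin n))))
      ∩ Metric.closedBall x r,
      ∃ z ∈ zeroSet p ∩ Metric.closedBall x r, dist u z ≤ Real.sqrt 2 * ε * r := by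
    rintro u ⟨⟨v, hvL, rfl⟩, huB⟩
    have hvr : ‖v‖ ≤ r := by
      have h1 := Metric.mem_closedBall.1 huB
      rw [dist_eq_norm, add_sub_cancel_left] at h1
      exact h1
    by_cases hεbig : 1 ≤ Real.sqrt 2 * ε
    · refine ⟨x, hxS, ?_⟩
      rw [dist_eq_norm, add_sub_cancel_left]
      calc ‖v‖ ≤ r := hvr
        _ = 1 * r := (one_mul r).symm
        _ ≤ Real.sqrt 2 * ε * r := mul_le_mul_of_nonneg_right hεbig hr.le
    · push_neg at hεbig
      have hεlt1 : ε < 1 := by nlinarith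
      have h1ε : 0 ≤ 1 - ε^2 := by nlinarith
      set s' : ℝ := Real.sqrt (1 - ε^2) with hs'def
      have hs'0 : 0 ≤ s' := Real.sqrt_nonneg _
      have hs'sq : s'^2 = 1 - ε^2 := Real.sq_sqrt h1ε
      have h1mε : 1 - ε ≤ s' := by
        have h2 : (1-ε)^2 ≤ 1 - ε^2 := by nlinarith
        calc 1 - ε = Real.sqrt ((1-ε)^2) := by rw [Real.sqrt_sq (by linarith)]
          _ ≤ Real.sqrt (1 - ε^2) := Real.sqrt_le_sqrt h2
      obtain ⟨v', hv'L, hv'n, hvv'⟩ : ∃ v' : EuclideanSpace ℝ (Fin n),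
          v' ∈ L ∧ ‖v'‖ ≤ s' * r ∧ ‖v - v'‖ ≤ ε * r := by
        by_cases hcase : ‖v‖ ≤ s' * r
        · exact ⟨v, hvL, hcase, by simp [mul_nonneg hε0 hr.le]⟩
        · push_neg at hcase
          have hvpos : 0 < ‖v‖ := lt_of_le_of_lt (by positivity) hcase
          refine ⟨(s' * r / ‖v‖) • v, L.smul_mem _ hvL, ?_, ?_⟩
          · rw [norm_smul, Real.norm_eq_abs, abs_of_nonneg (by positivity),
              div_mul_cancel₀ _ hvpos.ne']
          · have h3 : v - (s' * r / ‖v‖) • v = (1 - s' * r / ‖v‖) • v := by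
              rw [sub_smul, one_smul]
            rw [h3, norm_smul, Real.norm_eq_abs]
            have hfrac : s' * r / ‖v‖ ≤ 1 := by
              rw [div_le_one hvpos]; exact hcase.le
            rw [abs_of_nonneg (by linarith)]
            have h4 : (1 - s' * r / ‖v‖) * ‖v‖ = ‖v‖ - s' * r := by
              field_simp
            rw [h4]
            calc ‖v‖ - s' * r ≤ r - s' * r := by linarith
              _ = (1 - s') * r := by ring
              _ ≤ ε * r := mul_le_mul_of_nonneg_right (by linarith) hr.le
      set ah : EuclideanSpace ℝ (Fin n) := ‖a‖⁻¹ • a with hahdef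
      have hahn : ‖ah‖ = 1 := by
        rw [hahdef, norm_smul, Real.norm_eq_abs, abs_of_nonneg (by positivity),
          inv_mul_cancel₀ hna.ne']
      have haah : ⟪a, ah⟫ = ‖a‖ := by
        rw [hahdef, real_inner_smul_right, real_inner_self_eq_norm_sq, pow_two]
        field_simp
      have hav' : ⟪a, v'⟫ = 0 := (hmemL v').1 hv'L
      have hv'ah : ⟪v', ah⟫ = 0 := by
        rw [hahdef, real_inner_smul_right, real_inner_comm, hav', mul_zero]
      have hseg : ∀ t : ℝ, |t| ≤ ε * r →
          v' + t • ah ∈ Metric.closedBall (0 : EuclideanSpace ℝ (Fin n)) r := by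
        intro t ht
        have horth2 : ⟪v', t • ah⟫ = 0 := by
          rw [real_inner_smul_right, hv'ah, mul_zero]
        have hnsq : ‖v' + t • ah‖^2 = ‖v'‖^2 + t^2 := by
          rw [norm_add_sq_real, horth2, norm_smul, Real.norm_eq_abs, hahn, mul_one, sq_abs]
          ring
        have hr2 : s'^2 * r^2 + (ε*r)^2 = r^2 := by rw [hs'sq]; ring
        have hfin : ‖v' + t • ah‖ ≤ r := by
          refine sqrt_aux _ _ (norm_nonneg _) hr.le ?_
          rw [hnsq]
          nlinarith [mul_self_le_mul_self (norm_nonneg v') hv'n,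
            mul_self_le_mul_self (abs_nonneg t) ht, sq_abs t, hr2]
        simpa [Metric.mem_closedBall, dist_zero_right] using hfin
      have geval : ∀ t : ℝ, evalPt p (x + (v' + t • ah))
          = t * ‖a‖ + ∑ j ∈ sf, evalPt (homPart p x j) (v' + t • ah) := by
        intro t
        rw [hmain]
        congr 1
        rw [inner_add_right, hav', real_inner_smul_right, haah]; ring
      have gcont : Continuous fun t : ℝ => evalPt p (x + (v' + t • ah)) := by
        refine (continuous_evalPt p).comp ?_
        exact continuous_const.add (continuous_const.add (continuous_id.smul continuous_const))
      have hgleft : evalPt p (x + (v' + (-(ε*r)) • ah)) ≤ 0 := by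
        rw [geval]
        have hb := hR (v' + (-(ε*r)) • ah) (hseg _ (by rw [abs_neg, abs_of_nonneg (mul_nonneg hε0 hr.le)]))
        have := abs_le.1 hb
        nlinarith [this.1, this.2]
      have hgright : 0 ≤ evalPt p (x + (v' + (ε*r) • ah)) := by
        rw [geval]
        have hb := hR (v' + (ε*r) • ah) (hseg _ (by rw [abs_of_nonneg (mul_nonneg hε0 hr.le)]))
        have := abs_le.1 hb
        nlinarith [this.1, this.2]
      obtain ⟨t₀, ht₀mem, ht₀⟩ :
          ∃ t₀ ∈ Set.Icc (-(ε*r)) (ε*r), evalPt p (x + (v' + t₀ • ah)) = 0 := by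
        have hivt := intermediate_value_Icc (by linarith [mul_nonneg hε0 hr.le] :
          -(ε*r) ≤ ε*r) gcont.continuousOn
        have h0m : (0:ℝ) ∈ Set.Icc (evalPt p (x + (v' + (-(ε*r)) • ah)))
            (evalPt p (x + (v' + (ε*r) • ah))) := ⟨hgleft, hgright⟩
        exact hivt h0m
      have ht₀abs : |t₀| ≤ ε * r := abs_le.2 ⟨ht₀mem.1, ht₀mem.2⟩
      refine ⟨x + (v' + t₀ • ah), ⟨ht₀, ?_⟩, ?_⟩
      · rw [Metric.mem_closedBall, dist_eq_norm, add_sub_cancel_left]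
        have := hseg t₀ ht₀abs
        simpa [Metric.mem_closedBall, dist_zero_right] using this
      · have hdd : (x + v) - (x + (v' + t₀ • ah)) = (v - v') - t₀ • ah := by abel
        rw [dist_eq_norm, hdd]
        have hvv'L : v - v' ∈ L := L.sub_mem hvL hv'L
        have horth3 : ⟪v - v', t₀ • ah⟫ = 0 := by
          rw [real_inner_smul_right, hahdef, real_inner_smul_right, real_inner_comm,
            (hmemL _).1 hvv'L, mul_zero, mul_zero]
        have hsq2 : ‖(v - v') - t₀ • ah‖^2 = ‖v - v'‖^2 + t₀^2 := by
          rw [norm_sub_sq_real, horth3, norm_smul, Real.norm_eq_abs, hahn, mul_one, sq_abs]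
          ring
        have hbound2 : ‖(v - v') - t₀ • ah‖^2 ≤ (Real.sqrt 2 * ε * r)^2 := by
          have h2 : (Real.sqrt 2 * ε * r)^2 = 2 * (ε*r)^2 := by
            rw [mul_pow, mul_pow, Real.sq_sqrt (by norm_num : (0:ℝ) ≤ 2)]; ring
          rw [h2, hsq2]
          nlinarith [mul_self_le_mul_self (norm_nonneg (v - v')) hvv',
            mul_self_le_mul_self (abs_nonneg t₀) ht₀abs, sq_abs t₀]
        exact sqrt_aux _ _ (norm_nonneg _)
          (mul_nonneg (mul_nonneg (Real.sqrt_nonneg 2) hε0) hr.le) hbound2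
  have hH : hausdorffDist (zeroSet p ∩ Metric.closedBall x r)
      (((fun y => x + y) '' (L : Set (EuclideanSpace ℝ (Fin n))))
        ∩ Metric.closedBall x r) ≤ Real.sqrt 2 * ε * r :=
    hausdorffDist_le_of_mem_dist
      (by positivity) hdir1 hdir2
  have hflat : flatness (zeroSet p) x r ≤ Real.sqrt 2 * ε := by
    rw [flatness]
    have hbdd : BddBelow (Set.range fun L : {L : Submodule ℝ (EuclideanSpace ℝ (Fin n)) //
        Module.finrank ℝ L = n - 1} =>
        hausdorffDist (zeroSet p ∩ Metric.closedBall x r)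
          (((fun y => x + y) '' (L.1 : Set (EuclideanSpace ℝ (Fin n))))
            ∩ Metric.closedBall x r)) := by
      refine ⟨0, ?_⟩
      rintro b ⟨i, rfl⟩
      exact hausdorffDist_nonneg
    have hinf : (⨅ L : {L : Submodule ℝ (EuclideanSpace ℝ (Fin n)) //
        Module.finrank ℝ L = n - 1},
        hausdorffDist (zeroSet p ∩ Metric.closedBall x r)
          (((fun y => x + y) '' (L.1 : Set (EuclideanSpace ℝ (Fin n))))
            ∩ Metric.closedBall x r)) ≤ Real.sqrt 2 * ε * r :=
      ciInf_le_of_le hbdd ⟨L, hLrank⟩ hH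
    calc (1/r) * _ ≤ (1/r) * (Real.sqrt 2 * ε * r) :=
        mul_le_mul_of_nonneg_left hinf (by positivity)
      _ = Real.sqrt 2 * ε := by field_simp
  calc ENNReal.ofReal (flatness (zeroSet p) x r) ≤ ENNReal.ofReal (Real.sqrt 2 * ε) :=
      ENNReal.ofReal_le_ofReal hflat
    _ = ENNReal.ofReal ((Real.sqrt 2 * D) * ζ) := by rw [hεdef]; ring_nf
    _ = ENNReal.ofReal (Real.sqrt 2 * D) * ENNReal.ofReal ζ :=
      ENNReal.ofReal_mul (by positivity)
    _ ≤ ENNReal.ofReal (Real.sqrt 2 * ((d:ℝ) - 1)) * zeta d p x 1 r := by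
      rw [hDdef]
      exact mul_le_mul_right (by rw [hζdef]; exact ENNReal.ofReal_toReal_le) _
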